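/- Let u : ℕ → ℝ be defined by u_k = 1 + (−1)^k + k² if k = n² for some n ∈ ℕ, u_k = 1 + (−1)^k − (k−1)² if k = n² + 1 for some n ∈ ℕ, and u_k = 1 + (−1)^k otherwise, and let σ_k = (1/k)∑_{j=1}^k u_j. Then for every t > 0, the real sequences μ₀(σ_k − 1, t) and ν₀(σ_k − 1, t) are statistically convergent to 1 and 0 respectively; that is, (u_k) is statistically Cesàro summable to 1 in the IF-normed space (ℝ, μ₀, ν₀). -/

import Mathlib

open Filter

/-- The standard intuitionistic fuzzy norm membership function on `ℝ`. -/
noncomputable def mu0 (u t : ℝ) : ℝ := if t ≤ 0 then 0 else t / (t + |u|)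

/-- The standard intuitionistic fuzzy norm non-membership function on `ℝ`. -/
noncomputable def nu0 (u t : ℝ) : ℝ := if t ≤ 0 then 1 else |u| / (t + |u|)

open Classical in
/-- Statistical convergence of a real sequence. -/
def StatConvReal (x : ℕ → ℝ) (L : ℝ) : Prop :=
  ∀ ε > (0 : ℝ),
    Tendsto (fun n : ℕ =>
      (((Finset.Icc 1 n).filter (fun k => ε ≤ |x k - L|)).card : ℝ) / n)
      atTop (nhds 0)

open Classical in
/-- The sequence of Example 1. -/
noncomputable def uEx (k : ℕ) : ℝ :=
  if ∃ n : ℕ, k = n ^ 2 then 1 + (-1 : ℝ) ^ k + (k : ℝ) ^ 2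
  else if ∃ n : ℕ, k = n ^ 2 + 1 then 1 + (-1 : ℝ) ^ k - ((k : ℝ) - 1) ^ 2
  else 1 + (-1 : ℝ) ^ k

/-- Cesàro means of the sequence of Example 1. -/
noncomputable def sigmaEx (k : ℕ) : ℝ := (k : ℝ)⁻¹ * ∑ j ∈ Finset.Icc 1 k, uEx j

lemma not_sq_of_succ_sq {k : ℕ} (hk : 1 ≤ k) (h : ∃ n : ℕ, k + 1 = n ^ 2) :
    ¬ ∃ n : ℕ, k = n ^ 2 := by
  rintro ⟨a, rfl⟩
  obtain ⟨b, hb⟩ := h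
  have hab : a < b := by nlinarith
  have hb' : a + 1 ≤ b := hab
  nlinarith [Nat.pow_le_pow_left hb' 2]

open Classical in
lemma sum_uEx (k : ℕ) : ∑ j ∈ Finset.Icc 1 k, uEx j
    = (k : ℝ) + (if Even k then (0:ℝ) else -1)
      + (if ∃ n : ℕ, k = n ^ 2 then (k : ℝ) ^ 2 else 0) := by
  induction k with
  | zero =>
    rw [if_pos ⟨0, by norm_num⟩]
    simp
  | succ k ih =>
    rw [Finset.sum_Icc_succ_top (by omega : 1 ≤ k + 1), ih]
    have hpow : ((-1 : ℝ)) ^ (k + 1) = if Even k then -1 else 1 := by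
      rcases Nat.even_or_odd k with he | ho
      · rw [if_pos he, pow_succ, he.neg_one_pow, one_mul]
      · rw [if_neg (Nat.not_even_iff_odd.mpr ho), pow_succ, ho.neg_one_pow]; ring
    have hif : (if Even (k + 1) then (0:ℝ) else -1) = if Even k then (-1 : ℝ) else 0 := by
      rcases Nat.even_or_odd k with he | ho
      · rw [if_neg (by simp [Nat.even_add_one, he]), if_pos he]
      · rw [if_pos (Nat.even_add_one.mpr (Nat.not_even_iff_odd.mpr ho)),
          if_neg (Nat.not_even_iff_odd.mpr ho)]
    by_cases hs : ∃ n : ℕ, k + 1 = n ^ 2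
    · rw [if_pos hs]
      unfold uEx
      rw [if_pos hs]
      rcases Nat.eq_zero_or_pos k with rfl | hk
      · rw [if_pos ⟨0, by norm_num⟩, hif, hpow]
        norm_num
      · rw [if_neg (not_sq_of_succ_sq hk hs), hif, hpow]
        rcases Nat.even_or_odd k with he | ho
        · simp only [if_pos he]; push_cast; ring
        · simp only [if_neg (Nat.not_even_iff_odd.mpr ho)]; push_cast; ring
    · rw [if_neg hs]
      unfold uEx
      rw [if_neg hs]
      by_cases hq : ∃ n : ℕ, k = n ^ 2
      · have hp1 : ∃ n : ℕ, k + 1 = n ^ 2 + 1 := hq.imp fun n h => by omega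
        rw [if_pos hp1, if_pos hq, hif, hpow]
        rcases Nat.even_or_odd k with he | ho
        · simp only [if_pos he]; push_cast; ring
        · simp only [if_neg (Nat.not_even_iff_odd.mpr ho)]; push_cast; ring
      · have hp1 : ¬ ∃ n : ℕ, k + 1 = n ^ 2 + 1 := by
          rintro ⟨n, hn⟩
          exact hq ⟨n, by omega⟩
        rw [if_neg hp1, if_neg hq, hif, hpow]
        rcases Nat.even_or_odd k with he | ho
        · simp only [if_pos he]; push_cast; ring
        · simp only [if_neg (Nat.not_even_iff_odd.mpr ho)]; push_cast; ring

open Classical in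
lemma sigma_bound {k : ℕ} (hk : 1 ≤ k) (h : ¬ ∃ n : ℕ, k = n ^ 2) :
    |sigmaEx k - 1| ≤ 1 / k := by
  have hk0 : (0:ℝ) < k := by exact_mod_cast hk
  unfold sigmaEx
  rw [sum_uEx, if_neg h]
  have heq : (k : ℝ)⁻¹ * ((k : ℝ) + (if Even k then (0:ℝ) else -1) + 0) - 1
      = (if Even k then (0:ℝ) else -1) / k := by
    field_simp
    ring
  rw [heq, abs_div, abs_of_pos hk0, div_le_div_iff_of_pos_right hk0]
  split <;> norm_num

open Classical in
lemma card_sq_le (n : ℕ) :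
    ((Finset.Icc 1 n).filter (fun k => ∃ m : ℕ, k = m ^ 2)).card ≤ Nat.sqrt n := by
  have h : ((Finset.Icc 1 n).filter (fun k => ∃ m : ℕ, k = m ^ 2)).card
      ≤ (Finset.Icc 1 (Nat.sqrt n)).card := by
    apply Finset.card_le_card_of_injOn Nat.sqrt
    · intro k hk
      simp only [Finset.mem_coe, Finset.mem_filter, Finset.mem_Icc] at hk ⊢
      obtain ⟨⟨hk1, hk2⟩, m, rfl⟩ := hk
      rw [Nat.sqrt_eq']
      constructor
      · by_contra hm
        interval_cases m
        omega
      · calc m = Nat.sqrt (m ^ 2) := (Nat.sqrt_eq' m).symm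
          _ ≤ Nat.sqrt n := Nat.sqrt_le_sqrt hk2
    · intro a ha b hb hab
      simp only [Finset.coe_filter, Set.mem_setOf_eq, Finset.mem_Icc] at ha hb
      obtain ⟨_, ma, rfl⟩ := ha
      obtain ⟨_, mb, rfl⟩ := hb
      rw [Nat.sqrt_eq', Nat.sqrt_eq'] at hab
      rw [hab]
  simpa using h

lemma sqrt_tendsto : Tendsto Real.sqrt atTop atTop := by
  refine tendsto_atTop_atTop.2 fun b => ⟨b ^ 2, fun a ha => ?_⟩
  calc b ≤ |b| := le_abs_self b
    _ = Real.sqrt (b ^ 2) := (Real.sqrt_sq_eq_abs b).symm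
    _ ≤ Real.sqrt a := Real.sqrt_le_sqrt ha

lemma nat_sqrt_div_tendsto : Tendsto (fun n : ℕ => (Nat.sqrt n : ℝ) / n) atTop (nhds 0) := by
  apply squeeze_zero (g := fun n : ℕ => (Real.sqrt n)⁻¹)
  · intro n; positivity
  · intro n
    rcases Nat.eq_zero_or_pos n with h | h
    · simp [h]
    · have hn : (0:ℝ) < n := by exact_mod_cast h
      have h1 : (Nat.sqrt n : ℝ) ≤ Real.sqrt n := Real.nat_sqrt_le_real_sqrt
      have h2 : Real.sqrt n * Real.sqrt n = n := Real.mul_self_sqrt hn.le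
      rw [div_le_iff₀ hn]
      have h4 : (Real.sqrt (n:ℕ))⁻¹ * (n:ℕ) = Real.sqrt n := by
        rw [← h2]; field_simp
        rw [Real.sqrt_sq (Real.sqrt_nonneg _)]
      rw [h4]; exact h1
  · exact tendsto_inv_atTop_zero.comp (sqrt_tendsto.comp tendsto_natCast_atTop_atTop)

open Classical in
lemma key_tendsto (t : ℝ) (ht : 0 < t) (ε : ℝ) (hε : 0 < ε) :
    Tendsto (fun n : ℕ =>
      (((Finset.Icc 1 n).filter
          (fun k => ε ≤ |sigmaEx k - 1| / (t + |sigmaEx k - 1|))).card : ℝ) / n)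
      atTop (nhds 0) := by
  set N : ℕ := ⌈1 / (ε * t)⌉₊ + 1 with hN
  have hsub : ∀ n : ℕ, (Finset.Icc 1 n).filter
        (fun k => ε ≤ |sigmaEx k - 1| / (t + |sigmaEx k - 1|))
      ⊆ ((Finset.Icc 1 n).filter (fun k => ∃ m : ℕ, k = m ^ 2)) ∪ Finset.Icc 1 N := by
    intro n k hk
    simp only [Finset.mem_filter, Finset.mem_Icc] at hk
    obtain ⟨⟨hk1, hk2⟩, hkε⟩ := hk
    rw [Finset.mem_union]
    by_cases hsq : ∃ m : ℕ, k = m ^ 2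
    · exact Or.inl (Finset.mem_filter.2 ⟨Finset.mem_Icc.2 ⟨hk1, hk2⟩, hsq⟩)
    · refine Or.inr (Finset.mem_Icc.2 ⟨hk1, ?_⟩)
      by_contra hkN
      push_neg at hkN
      have hkR : 1 / (ε * t) < (k : ℝ) := by
        have hceil : (1:ℝ) / (ε * t) ≤ ⌈1 / (ε * t)⌉₊ := Nat.le_ceil _
        have hNk : (N : ℝ) < k := by exact_mod_cast hkN
        have hNval : ((⌈1 / (ε * t)⌉₊ : ℝ) + 1) = (N : ℝ) := by rw [hN]; push_cast; ring
        linarith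
      set a := |sigmaEx k - 1| with ha
      have ha0 : 0 ≤ a := abs_nonneg _
      have hk0 : (0:ℝ) < k := by exact_mod_cast hk1
      have hab : a ≤ 1 / k := sigma_bound hk1 hsq
      have hc1 : a / (t + a) ≤ a / t := by
        gcongr <;> linarith
      have hc2 : a / t ≤ (1 / (k:ℝ)) / t := by
        gcongr
      have hc : a / (t + a) ≤ (1 / (k:ℝ)) / t := hc1.trans hc2
      have hdd : (1 / (k:ℝ)) / t = 1 / ((k:ℝ) * t) := by
        rw [div_div]
      have hmul : 1 < (k:ℝ) * (ε * t) := (div_lt_iff₀ (by positivity)).mp hkR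
      have hfin : (1:ℝ) / ((k:ℝ) * t) < ε := by
        rw [div_lt_iff₀ (by positivity)]
        nlinarith
      rw [hdd] at hc
      linarith
  apply squeeze_zero (g := fun n : ℕ => ((Nat.sqrt n : ℝ) + N) / n)
  · intro n; positivity
  · intro n
    rcases Nat.eq_zero_or_pos n with rfl | hn
    · simp
    · have hn0 : (0:ℝ) < n := by exact_mod_cast hn
      have hcard : (((Finset.Icc 1 n).filter
            (fun k => ε ≤ |sigmaEx k - 1| / (t + |sigmaEx k - 1|))).card : ℝ)
          ≤ (Nat.sqrt n : ℝ) + N := by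
        have h1 : ((Finset.Icc 1 n).filter
              (fun k => ε ≤ |sigmaEx k - 1| / (t + |sigmaEx k - 1|))).card
            ≤ Nat.sqrt n + N := by
          calc ((Finset.Icc 1 n).filter
                (fun k => ε ≤ |sigmaEx k - 1| / (t + |sigmaEx k - 1|))).card
              ≤ (((Finset.Icc 1 n).filter (fun k => ∃ m : ℕ, k = m ^ 2))
                  ∪ Finset.Icc 1 N).card := Finset.card_le_card (hsub n)
            _ ≤ ((Finset.Icc 1 n).filter (fun k => ∃ m : ℕ, k = m ^ 2)).card
                + (Finset.Icc 1 N).card := Finset.card_union_le _ _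
            _ ≤ Nat.sqrt n + N := by
                have := card_sq_le n
                have h2 : (Finset.Icc 1 N).card = N := by
                  rw [Nat.card_Icc]; omega
                omega
        exact_mod_cast h1
      gcongr
  · have h := nat_sqrt_div_tendsto.add (tendsto_const_div_atTop_nhds_zero_nat (N : ℝ))
    rw [add_zero] at h
    exact h.congr fun n => (add_div _ _ _).symm

theorem uEx_statistically_cesaro_summable_to_one :
    ∀ t > (0 : ℝ),
      StatConvReal (fun k => mu0 (sigmaEx k - 1) t) 1 ∧
      StatConvReal (fun k => nu0 (sigmaEx k - 1) t) 0 := by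
  intro t ht
  have hts : ¬ t ≤ 0 := not_le.mpr ht
  constructor
  · intro ε hε
    have habs : ∀ k : ℕ, |mu0 (sigmaEx k - 1) t - 1|
        = |sigmaEx k - 1| / (t + |sigmaEx k - 1|) := by
      intro k
      have ha0 : 0 ≤ |sigmaEx k - 1| := abs_nonneg _
      have hta : 0 < t + |sigmaEx k - 1| := by linarith
      rw [mu0, if_neg hts,
        show t / (t + |sigmaEx k - 1|) - 1
            = -(|sigmaEx k - 1| / (t + |sigmaEx k - 1|)) from by field_simp; ring,
        abs_neg, abs_of_nonneg (by positivity)]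
    simp only [habs]
    exact key_tendsto t ht ε hε
  · intro ε hε
    have habs : ∀ k : ℕ, |nu0 (sigmaEx k - 1) t - 0|
        = |sigmaEx k - 1| / (t + |sigmaEx k - 1|) := by
      intro k
      have ha0 : 0 ≤ |sigmaEx k - 1| := abs_nonneg _
      have hta : 0 < t + |sigmaEx k - 1| := by linarith
      rw [nu0, if_neg hts, sub_zero, abs_of_nonneg (by positivity)]
    simp only [habs]
    exact key_tendsto t ht ε hε
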